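/- arXiv:1703.08254 — 5 statements merged into one kernel-verified Lean document; each statement's English description precedes it below -/
import Mathlib

section
/- Suppose (x̂, ê) ∈ ℂ^N × ℂ^α and q̂ ∈ ℂ^N are such that q̂ is dual feasible and strong duality holds, i.e. P(x̂, ê) = D(q̂). Suppose moreover that x̂ admits an atomic decomposition achieving its atomic norm: x̂ = Σ_{k=1}^K c_k a(f_k, φ_k) with K ∈ ℕ, c_k > 0, f_k ∈ [0,1), φ_k ∈ [0,2π), and Σ_{k=1}^K c_k = ‖x̂‖_A. Then (i) the dual polynomial Y(f) = ⟨q̂, a(f,0)⟩ satisfies Y(f_k) = γ · e^{iφ_k} for every k = 1,…,K, and (ii) for every j ∈ {1,…,α} with ê_j ≠ 0 one has q̂_{t_j} = λ · ê_j / |ê_j|. -/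
noncomputable section

/-- The atom `a(f,φ) ∈ ℂ^N` with entries `exp(i(2πf·t + φ))`, `t = 0,…,N-1`. -/
def atom (N : ℕ) (f φ : ℝ) : Fin N → ℂ :=
  fun t => Complex.exp (Complex.I * Complex.ofReal (2 * Real.pi * f * (t : ℕ) + φ))

/-- The atomic norm `‖x‖_A`. -/
def atomicNorm (N : ℕ) (x : Fin N → ℂ) : ℝ :=
  sInf { r : ℝ | ∃ (K : ℕ) (c : Fin K → ℝ) (f : Fin K → ℝ) (φ : Fin K → ℝ),
    (∀ k, 0 ≤ c k) ∧ (∀ k, f k ∈ Set.Ico (0 : ℝ) 1) ∧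
    (∀ k, φ k ∈ Set.Ico (0 : ℝ) (2 * Real.pi)) ∧
    (x = ∑ k, fun t => (c k : ℂ) * atom N (f k) (φ k) t) ∧ r = ∑ k, c k }

/-- `⟨q,x⟩ = Σ_t q_t · conj(x_t)`. -/
def cinner (N : ℕ) (q x : Fin N → ℂ) : ℂ :=
  ∑ t, q t * (starRingEnd ℂ) (x t)

/-- `⟨q,x⟩_ℝ = Re⟨q,x⟩`. -/
def rinner (N : ℕ) (q x : Fin N → ℂ) : ℝ := (cinner N q x).re

/-- The dual atomic norm `‖q‖_A^* = sup {⟨q,x⟩_ℝ : ‖x‖_A ≤ 1}`. -/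
def dualAtomicNorm (N : ℕ) (q : Fin N → ℂ) : ℝ :=
  sSup { r : ℝ | ∃ x : Fin N → ℂ, atomicNorm N x ≤ 1 ∧ r = rinner N q x }

/-- `‖e‖₁ = Σ_j |e_j|`. -/
def l1 (n : ℕ) (e : Fin n → ℂ) : ℝ := ∑ j, ‖e j‖

/-- `‖e‖₂² = Σ_j |e_j|²`. -/
def l2sq (n : ℕ) (e : Fin n → ℂ) : ℝ := ∑ j, ‖e j‖ ^ 2

/-- The primal objective `P(x,e) = γ‖x‖_A + λ‖e‖₁ + ½‖z̃ − x(Ω) − e‖₂²`,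
where `Ω` is encoded by the strictly monotone index map `ι : Fin α → Fin N`. -/
def primalObj (N α : ℕ) (ι : Fin α → Fin N) (ztil : Fin α → ℂ) (γ lam : ℝ)
    (x : Fin N → ℂ) (e : Fin α → ℂ) : ℝ :=
  γ * atomicNorm N x + lam * l1 α e +
    (1 / 2) * l2sq α (fun j => ztil j - x (ι j) - e j)

/-- The dual objective `D(q) = ⟨q(Ω), z̃⟩_ℝ − ½‖q‖₂²`. -/
def dualObj (N α : ℕ) (ι : Fin α → Fin N) (ztil : Fin α → ℂ) (q : Fin N → ℂ) : ℝ :=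
  rinner α (fun j => q (ι j)) ztil - (1 / 2) * l2sq N q

/-- Dual feasibility: `‖q‖_A^* ≤ γ`, `‖q‖_∞ ≤ λ`, and `q` vanishes off `Ω`. -/
def dualFeasible (N α : ℕ) (ι : Fin α → Fin N) (γ lam : ℝ) (q : Fin N → ℂ) : Prop :=
  dualAtomicNorm N q ≤ γ ∧ (∀ t, ‖q t‖ ≤ lam) ∧
    (∀ t : Fin N, (∀ j, ι j ≠ t) → q t = 0)


namespace Lemma1Aux

open Complex Finset

lemma polar (z : ℂ) : ∃ c φ : ℝ, 0 ≤ c ∧ φ ∈ Set.Ico (0:ℝ) (2*Real.pi) ∧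
    (c:ℂ) * Complex.exp (Complex.I * φ) = z := by
  refine ⟨‖z‖, if Complex.arg z < 0 then Complex.arg z + 2*Real.pi else Complex.arg z,
    (norm_nonneg z), ?_, ?_⟩
  · have h1 := Complex.arg_le_pi z
    have h2 := Complex.neg_pi_lt_arg z
    have hπ := Real.pi_pos
    constructor <;> split <;> [linarith; linarith; linarith; linarith]
  · have key : (‖z‖ : ℂ) * Complex.exp (Complex.I * (Complex.arg z : ℂ)) = z := by
      rw [mul_comm Complex.I]; exact Complex.norm_mul_exp_arg_mul_I z
    split
    · push_cast
      rw [mul_add, Complex.exp_add,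
        show Complex.I * (2*(Real.pi:ℂ)) = 2*(Real.pi:ℂ)*Complex.I by ring,
        Complex.exp_two_pi_mul_I, mul_one]
      exact key
    · exact key

/-- every vector is a nonneg combination of atoms -/
lemma exists_decomp (N : ℕ) (x : Fin N → ℂ) :
    ∃ (c f φ : Fin N → ℝ), (∀ k, 0 ≤ c k) ∧ (∀ k, f k ∈ Set.Ico (0:ℝ) 1) ∧
      (∀ k, φ k ∈ Set.Ico (0:ℝ) (2*Real.pi)) ∧
      x = ∑ k, fun t => (c k : ℂ) * atom N (f k) (φ k) t := by
  rcases Nat.eq_zero_or_pos N with hN | hN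
  · subst hN
    exact ⟨0, 0, 0, fun k => le_refl 0, fun k => k.elim0, fun k => k.elim0,
      funext fun t => t.elim0⟩
  have hN0 : (N:ℂ) ≠ 0 := by exact_mod_cast hN.ne'
  set ω : ℂ := Complex.exp (2 * Real.pi * Complex.I / N) with hω
  have hprim : IsPrimitiveRoot ω N := by
    have := Complex.isPrimitiveRoot_exp N hN.ne'
    simpa [hω] using this
  set v : Fin N → ℂ := fun t => ω ^ (t : ℕ) with hv
  have hvinj : Function.Injective v := by
    intro a b hab
    have := hprim.pow_inj a.isLt b.isLt hab
    exact Fin.ext this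
  set M : Matrix (Fin N) (Fin N) ℂ := Matrix.vandermonde v with hM
  have hdet : M.det ≠ 0 := Matrix.det_vandermonde_ne_zero_iff.mpr hvinj
  have hunit : IsUnit M.det := isUnit_iff_ne_zero.mpr hdet
  set z : Fin N → ℂ := M⁻¹.mulVec x with hz
  have hMz : M.mulVec z = x := by
    rw [hz, Matrix.mulVec_mulVec, Matrix.mul_nonsing_inv _ hunit, Matrix.one_mulVec]
  choose c φ hc hφ hpol using fun j => polar (z j)
  refine ⟨c, fun j => (j:ℕ)/N, φ, hc, ?_, hφ, ?_⟩
  · intro k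
    constructor
    · positivity
    · rw [div_lt_one (by exact_mod_cast hN)]
      exact_mod_cast k.isLt
  · funext t
    have := congrFun hMz t
    rw [← this]
    rw [Matrix.mulVec, dotProduct]
    rw [Finset.sum_apply]
    refine Finset.sum_congr rfl fun j _ => ?_
    have hMtj : M t j = ω ^ ((t:ℕ) * (j:ℕ)) := by
      rw [hM, Matrix.vandermonde]
      simp [hv, ← pow_mul]
    rw [hMtj, ← hpol j]
    have hatom : atom N ((j:ℕ)/N) (φ j) t
        = Complex.exp (Complex.I * (φ j)) * ω ^ ((t:ℕ) * (j:ℕ)) := by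
      rw [atom, hω, ← Complex.exp_nat_mul, ← Complex.exp_add]
      congr 1
      push_cast
      field_simp
      ring
    rw [hatom]
    ring

lemma abs_atom (N : ℕ) (f φ : ℝ) (t : Fin N) : ‖atom N f φ t‖ = 1 := by
  rw [atom, Complex.norm_exp]
  simp

lemma cinner_sum (N K : ℕ) (q : Fin N → ℂ) (c f φ : Fin K → ℝ) :
    cinner N q (∑ k, fun t => (c k : ℂ) * atom N (f k) (φ k) t)
      = ∑ k, (c k : ℂ) * cinner N q (atom N (f k) (φ k)) := by
  unfold cinner
  simp only [Finset.sum_apply, map_sum, Finset.mul_sum]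
  rw [Finset.sum_comm]
  refine Finset.sum_congr rfl fun k _ => Finset.sum_congr rfl fun t _ => ?_
  rw [map_mul, Complex.conj_ofReal]
  ring

lemma abs_cinner_atom_le (N : ℕ) (q : Fin N → ℂ) (f φ : ℝ) :
    ‖cinner N q (atom N f φ)‖ ≤ ∑ t, ‖q t‖ := by
  unfold cinner
  refine le_trans (norm_sum_le _ _) (le_of_eq ?_)
  refine Finset.sum_congr rfl fun t _ => ?_
  rw [norm_mul, Complex.norm_conj, abs_atom, mul_one]

lemma atomicNorm_atom_le_one (N : ℕ) (f φ : ℝ) (hf : f ∈ Set.Ico (0:ℝ) 1)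
    (hφ : φ ∈ Set.Ico (0:ℝ) (2*Real.pi)) : atomicNorm N (atom N f φ) ≤ 1 := by
  apply csInf_le
  · refine ⟨0, fun r hr => ?_⟩
    obtain ⟨K, c, _, _, hc, _, _, _, hr⟩ := hr
    exact hr ▸ Finset.sum_nonneg fun k _ => hc k
  · exact ⟨1, fun _ => 1, fun _ => f, fun _ => φ, fun _ => zero_le_one,
      fun _ => hf, fun _ => hφ, by simp, by simp⟩

lemma bddAbove_dualSet (N : ℕ) (q : Fin N → ℂ) :
    BddAbove { r : ℝ | ∃ x : Fin N → ℂ, atomicNorm N x ≤ 1 ∧ r = rinner N q x } := by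
  refine ⟨2 * ∑ t, ‖q t‖, fun r hr => ?_⟩
  obtain ⟨x, hx, rfl⟩ := hr
  obtain ⟨c0, f0, φ0, hc0, hf0, hφ0, hx0⟩ := exists_decomp N x
  have hQ0 : (0:ℝ) ≤ ∑ t, ‖q t‖ :=
    Finset.sum_nonneg fun t _ => norm_nonneg _
  have hne : Set.Nonempty { r : ℝ | ∃ (K : ℕ) (c : Fin K → ℝ) (f : Fin K → ℝ) (φ : Fin K → ℝ),
      (∀ k, 0 ≤ c k) ∧ (∀ k, f k ∈ Set.Ico (0 : ℝ) 1) ∧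
      (∀ k, φ k ∈ Set.Ico (0 : ℝ) (2 * Real.pi)) ∧
      (x = ∑ k, fun t => (c k : ℂ) * atom N (f k) (φ k) t) ∧ r = ∑ k, c k } :=
    ⟨∑ k, c0 k, N, c0, f0, φ0, hc0, hf0, hφ0, hx0, rfl⟩
  have hlt : atomicNorm N x < 2 := lt_of_le_of_lt hx one_lt_two
  obtain ⟨r', hr', hr'2⟩ := exists_lt_of_csInf_lt hne hlt
  obtain ⟨K, c, f, φ, hcn, hfi, hφi, hxd, hrs⟩ := hr'
  have hrinner : rinner N q x = ∑ k, c k * (cinner N q (atom N (f k) (φ k))).re := by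
    rw [rinner, hxd, cinner_sum, Complex.re_sum]
    exact Finset.sum_congr rfl fun k _ => Complex.re_ofReal_mul _ _
  rw [hrinner]
  calc ∑ k, c k * (cinner N q (atom N (f k) (φ k))).re
      ≤ ∑ k, c k * (∑ t, ‖q t‖) := by
        refine Finset.sum_le_sum fun k _ => mul_le_mul_of_nonneg_left ?_ (hcn k)
        exact le_trans (Complex.re_le_norm _) (abs_cinner_atom_le N q (f k) (φ k))
    _ = r' * (∑ t, ‖q t‖) := by rw [← Finset.sum_mul, ← hrs]
    _ ≤ 2 * ∑ t, ‖q t‖ := mul_le_mul_of_nonneg_right hr'2.le hQ0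

lemma conj_atom (N : ℕ) (f φ : ℝ) (t : Fin N) :
    (starRingEnd ℂ) (atom N f φ t)
      = Complex.exp (-(Complex.I * φ)) * (starRingEnd ℂ) (atom N f 0 t) := by
  rw [atom, atom, ← Complex.exp_conj, ← Complex.exp_conj, ← Complex.exp_add]
  congr 1
  rw [map_mul, map_mul, Complex.conj_I, Complex.conj_ofReal, Complex.conj_ofReal]
  push_cast
  ring

lemma cinner_atom_phase (N : ℕ) (q : Fin N → ℂ) (f φ : ℝ) :
    cinner N q (atom N f φ) = Complex.exp (-(Complex.I * φ)) * cinner N q (atom N f 0) := by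
  unfold cinner
  rw [Finset.mul_sum]
  refine Finset.sum_congr rfl fun t _ => ?_
  rw [conj_atom]
  ring

lemma sum_restrict {N α : ℕ} (ι : Fin α → Fin N) (hinj : Function.Injective ι)
    (g : Fin N → ℝ) (hg : ∀ t, (∀ j, ι j ≠ t) → g t = 0) :
    ∑ t, g t = ∑ j, g (ι j) := by
  have h1 : ∑ j, g (ι j) = ∑ t ∈ Finset.univ.image ι, g t :=
    (Finset.sum_image (fun a _ b _ h => hinj h)).symm
  rw [h1]
  exact (Finset.sum_subset (Finset.subset_univ _)
    (fun t _ ht => hg t (fun j hj => ht (Finset.mem_image.mpr ⟨j, Finset.mem_univ j, hj⟩)))).symm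

lemma exists_phase (z : ℂ) : ∃ ψ ∈ Set.Ico (0:ℝ) (2*Real.pi),
    (Complex.exp (-(Complex.I * ψ)) * z).re = ‖z‖ := by
  obtain ⟨c, ψ, hc, hψ, hz⟩ := polar z
  have habs : ‖z‖ = c := by
    rw [← hz, norm_mul, Complex.norm_exp]
    simp [_root_.abs_of_nonneg hc, hc]
  refine ⟨ψ, hψ, ?_⟩
  rw [habs, ← hz, show Complex.exp (-(Complex.I*ψ)) * ((c:ℂ) * Complex.exp (Complex.I*ψ))
      = (c:ℂ) * Complex.exp (-(Complex.I*ψ) + Complex.I*ψ) by rw [Complex.exp_add]; ring]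
  simp

lemma real_of_re_eq_abs_le {z : ℂ} {b : ℝ} (h1 : z.re = b) (h2 : ‖z‖ ≤ b) :
    z = (b : ℂ) := by
  have h3 : ‖z‖ ^ 2 ≤ b ^ 2 :=
    pow_le_pow_left₀ (norm_nonneg z) h2 2
  rw [Complex.sq_norm, Complex.normSq_apply, h1] at h3
  have him : z.im = 0 := by nlinarith
  exact Complex.ext (by simp [h1]) (by simp [him])

end Lemma1Aux

/-- **Lemma 1.** If `q̂` is dual feasible, strong duality `P(x̂,ê) = D(q̂)` holds, and `x̂`
admits an atomic decomposition achieving its atomic norm, then the dual polynomial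
satisfies `Y(f_k) = γ e^{iφ_k}` for every `k`, and `q̂_{t_j} = λ · sign(ê_j)` whenever
`ê_j ≠ 0`. -/
theorem lemma1_dual_certificate
    (N α : ℕ) (hN : 0 < N) (ι : Fin α → Fin N) (hι : StrictMono ι)
    (ztil : Fin α → ℂ) (γ lam : ℝ) (hγ : 0 < γ) (hlam : 0 < lam)
    (xhat : Fin N → ℂ) (ehat : Fin α → ℂ) (qhat : Fin N → ℂ)
    (hfeas : dualFeasible N α ι γ lam qhat)
    (hstrong : primalObj N α ι ztil γ lam xhat ehat = dualObj N α ι ztil qhat)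
    (K : ℕ) (c f φ : Fin K → ℝ)
    (hc : ∀ k, 0 < c k)
    (hf : ∀ k, f k ∈ Set.Ico (0 : ℝ) 1)
    (hφ : ∀ k, φ k ∈ Set.Ico (0 : ℝ) (2 * Real.pi))
    (hdecomp : xhat = ∑ k, fun t => (c k : ℂ) * atom N (f k) (φ k) t)
    (hachieve : ∑ k, c k = atomicNorm N xhat) :
    (∀ k, cinner N qhat (atom N (f k) 0) = (γ : ℂ) * Complex.exp (Complex.I * (φ k : ℂ))) ∧
    (∀ j, ehat j ≠ 0 → qhat (ι j) = (lam : ℂ) * ehat j / (‖ehat j‖ : ℂ)) := by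
  obtain ⟨hdual, hinf, hsupp⟩ := hfeas
  have hιinj : Function.Injective ι := hι.injective
  -- ⟨q, a(g,ψ)⟩_ℝ ≤ γ for admissible atoms
  have hatomle : ∀ (g ψ : ℝ), g ∈ Set.Ico (0:ℝ) 1 → ψ ∈ Set.Ico (0:ℝ) (2*Real.pi) →
      (cinner N qhat (atom N g ψ)).re ≤ γ := by
    intro g ψ hg hψ
    have h1 : rinner N qhat (atom N g ψ) ≤ dualAtomicNorm N qhat :=
      le_csSup (Lemma1Aux.bddAbove_dualSet N qhat)
        ⟨atom N g ψ, Lemma1Aux.atomicNorm_atom_le_one N g ψ hg hψ, rfl⟩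
    exact le_trans h1 hdual
  -- |Y(g)| ≤ γ
  have hYle : ∀ g : ℝ, g ∈ Set.Ico (0:ℝ) 1 →
      ‖cinner N qhat (atom N g 0)‖ ≤ γ := by
    intro g hg
    obtain ⟨ψ, hψ, hre⟩ := Lemma1Aux.exists_phase (cinner N qhat (atom N g 0))
    rw [← hre, ← Lemma1Aux.cinner_atom_phase]
    exact hatomle g ψ hg hψ
  -- abbreviations for the three slack sums
  set R : Fin K → ℝ := fun k => (cinner N qhat (atom N (f k) (φ k))).re with hRdef
  set W : Fin α → ℝ := fun j => (qhat (ι j) * (starRingEnd ℂ) (ehat j)).re with hWdef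
  set V : Fin α → ℝ := fun j =>
    (qhat (ι j) * (starRingEnd ℂ) (ztil j - xhat (ι j) - ehat j)).re with hVdef
  -- l2 norm of q restricted
  have hq2 : l2sq N qhat = ∑ j, ‖qhat (ι j)‖^2 := by
    rw [l2sq]
    exact Lemma1Aux.sum_restrict ι hιinj (fun t => ‖qhat t‖^2)
      (fun t ht => by simp [hsupp t ht])
  -- ⟨q,x⟩ via restriction and decomposition
  have hx1 : ∑ j, (qhat (ι j) * (starRingEnd ℂ) (xhat (ι j))).re = ∑ k, c k * R k := by
    have h1 : ∑ t, (qhat t * (starRingEnd ℂ) (xhat t)).re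
        = ∑ j, (qhat (ι j) * (starRingEnd ℂ) (xhat (ι j))).re :=
      Lemma1Aux.sum_restrict ι hιinj (fun t => (qhat t * (starRingEnd ℂ) (xhat t)).re)
        (fun t ht => by simp [hsupp t ht])
    rw [← h1]
    have h2 : ∑ t, (qhat t * (starRingEnd ℂ) (xhat t)).re = (cinner N qhat xhat).re := by
      rw [cinner, Complex.re_sum]
    rw [h2, hdecomp, Lemma1Aux.cinner_sum, Complex.re_sum]
    exact Finset.sum_congr rfl fun k _ => Complex.re_ofReal_mul _ _
  -- the dual objective expanded
  have hD : dualObj N α ι ztil qhat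
      = (∑ k, c k * R k) + (∑ j, W j) + (∑ j, V j)
        - (1/2) * (∑ j, ‖qhat (ι j)‖^2) := by
    rw [dualObj, hq2, rinner, cinner]
    have hsplit : ∀ j : Fin α, (qhat (ι j) * (starRingEnd ℂ) (ztil j)).re
        = (qhat (ι j) * (starRingEnd ℂ) (xhat (ι j))).re + W j + V j := by
      intro j
      have h : qhat (ι j) * (starRingEnd ℂ) (ztil j)
          = qhat (ι j) * (starRingEnd ℂ) (xhat (ι j))
            + qhat (ι j) * (starRingEnd ℂ) (ehat j)
            + qhat (ι j) * (starRingEnd ℂ) (ztil j - xhat (ι j) - ehat j) := by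
        rw [map_sub, map_sub]; ring
      rw [h, Complex.add_re, Complex.add_re, hWdef, hVdef]
    rw [Complex.re_sum]
    have : ∑ j, (qhat (ι j) * (starRingEnd ℂ) (ztil j)).re
        = (∑ j, (qhat (ι j) * (starRingEnd ℂ) (xhat (ι j))).re) + (∑ j, W j) + (∑ j, V j) := by
      rw [← Finset.sum_add_distrib, ← Finset.sum_add_distrib]
      exact Finset.sum_congr rfl fun j _ => hsplit j
    rw [this, hx1]
  -- the primal objective expanded
  have hP : primalObj N α ι ztil γ lam xhat ehat
      = γ * (∑ k, c k) + lam * (∑ j, ‖ehat j‖)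
        + (1/2) * (∑ j, ‖ztil j - xhat (ι j) - ehat j‖^2) := by
    rw [primalObj, ← hachieve, l1, l2sq]
  -- quadratic term identity
  have hCterm : ∀ j : Fin α, (1/2) * ‖qhat (ι j) - (ztil j - xhat (ι j) - ehat j)‖^2
      = (1/2) * ‖ztil j - xhat (ι j) - ehat j‖^2 - V j
        + (1/2) * ‖qhat (ι j)‖^2 := by
    intro j
    rw [hVdef]
    simp only [Complex.sq_norm, Complex.normSq_sub]
    ring
  -- sum manipulations
  have s1 : ∑ k, c k * (γ - R k) = γ * (∑ k, c k) - ∑ k, c k * R k := by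
    rw [Finset.mul_sum, ← Finset.sum_sub_distrib]
    exact Finset.sum_congr rfl fun k _ => by ring
  have s2 : ∑ j, (lam * ‖ehat j‖ - W j)
      = lam * (∑ j, ‖ehat j‖) - ∑ j, W j := by
    rw [Finset.mul_sum, ← Finset.sum_sub_distrib]
  have s3 : ∑ j, (1/2) * ‖qhat (ι j) - (ztil j - xhat (ι j) - ehat j)‖^2
      = (1/2) * (∑ j, ‖ztil j - xhat (ι j) - ehat j‖^2) - (∑ j, V j)
        + (1/2) * (∑ j, ‖qhat (ι j)‖^2) := by
    rw [Finset.mul_sum, Finset.mul_sum, ← Finset.sum_sub_distrib, ← Finset.sum_add_distrib]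
    exact Finset.sum_congr rfl fun j _ => hCterm j
  -- the grand zero identity
  have hzero : (∑ k, c k * (γ - R k)) + (∑ j, (lam * ‖ehat j‖ - W j))
      + (∑ j, (1/2) * ‖qhat (ι j) - (ztil j - xhat (ι j) - ehat j)‖^2) = 0 := by
    rw [s1, s2, s3]
    linarith [hstrong, hP, hD]
  -- nonnegativity of each term
  have hAnn : ∀ k ∈ Finset.univ, (0:ℝ) ≤ c k * (γ - R k) := fun k _ =>
    mul_nonneg (hc k).le (sub_nonneg.mpr (hatomle (f k) (φ k) (hf k) (hφ k)))
  have hBnn : ∀ j ∈ Finset.univ, (0:ℝ) ≤ lam * ‖ehat j‖ - W j := by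
    intro j _
    have h1 : W j ≤ ‖qhat (ι j) * (starRingEnd ℂ) (ehat j)‖ := Complex.re_le_norm _
    have h2 : ‖qhat (ι j) * (starRingEnd ℂ) (ehat j)‖
        = ‖qhat (ι j)‖ * ‖ehat j‖ := by
      rw [norm_mul, Complex.norm_conj]
    have h3 := mul_le_mul_of_nonneg_right (hinf (ι j)) (norm_nonneg (ehat j))
    linarith
  have hCnn : ∀ j ∈ Finset.univ, (0:ℝ)
      ≤ (1/2) * ‖qhat (ι j) - (ztil j - xhat (ι j) - ehat j)‖^2 := fun j _ => by
    positivity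
  have hSA : (0:ℝ) ≤ ∑ k, c k * (γ - R k) := Finset.sum_nonneg hAnn
  have hSB : (0:ℝ) ≤ ∑ j, (lam * ‖ehat j‖ - W j) := Finset.sum_nonneg hBnn
  have hSC : (0:ℝ) ≤ ∑ j, (1/2) * ‖qhat (ι j) - (ztil j - xhat (ι j) - ehat j)‖^2 :=
    Finset.sum_nonneg hCnn
  have hSA0 : ∑ k, c k * (γ - R k) = 0 := by linarith
  have hSB0 : ∑ j, (lam * ‖ehat j‖ - W j) = 0 := by linarith
  have hAterm := (Finset.sum_eq_zero_iff_of_nonneg hAnn).mp hSA0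
  have hBterm := (Finset.sum_eq_zero_iff_of_nonneg hBnn).mp hSB0
  constructor
  · -- part (i)
    intro k
    have h0 := hAterm k (Finset.mem_univ k)
    have hRk : R k = γ := by
      rcases mul_eq_zero.mp h0 with h | h
      · exact absurd h (hc k).ne'
      · linarith [sub_eq_zero.mp h]
    have hreq : (Complex.exp (-(Complex.I * (φ k))) * cinner N qhat (atom N (f k) 0)).re = γ := by
      rw [← Lemma1Aux.cinner_atom_phase]
      exact hRk
    have habsq : ‖Complex.exp (-(Complex.I * (φ k))) * cinner N qhat (atom N (f k) 0)‖
        ≤ γ := by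
      rw [norm_mul, Complex.norm_exp]
      have h5 : (-(Complex.I * ((φ k : ℝ) : ℂ))).re = 0 := by simp
      rw [h5, Real.exp_zero, one_mul]
      exact hYle (f k) (hf k)
    have hz := Lemma1Aux.real_of_re_eq_abs_le hreq habsq
    have h6 : Complex.exp (Complex.I * (φ k)) * (Complex.exp (-(Complex.I * (φ k)))
        * cinner N qhat (atom N (f k) 0)) = Complex.exp (Complex.I * (φ k)) * γ := by
      rw [hz]
    rw [← mul_assoc, ← Complex.exp_add] at h6
    simp only [add_neg_cancel, Complex.exp_zero, one_mul] at h6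
    rw [h6]
    ring
  · -- part (ii)
    intro j hj
    have h0 := hBterm j (Finset.mem_univ j)
    have hre : W j = lam * ‖ehat j‖ := by linarith [sub_eq_zero.mp h0]
    have habs : ‖qhat (ι j) * (starRingEnd ℂ) (ehat j)‖
        ≤ lam * ‖ehat j‖ := by
      rw [norm_mul, Complex.norm_conj]
      exact mul_le_mul_of_nonneg_right (hinf (ι j)) (norm_nonneg _)
    have heq : qhat (ι j) * (starRingEnd ℂ) (ehat j)
        = ((lam * ‖ehat j‖ : ℝ) : ℂ) :=
      Lemma1Aux.real_of_re_eq_abs_le hre habs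
    have habse : (‖ehat j‖ : ℂ) ≠ 0 := by
      exact_mod_cast (norm_ne_zero_iff.mpr hj)
    rw [eq_div_iff habse]
    have hsq : (starRingEnd ℂ) (ehat j) * ehat j = ((‖ehat j‖ : ℂ))^2 := by
      rw [mul_comm, Complex.mul_conj]
      rw [← Complex.sq_norm]
      push_cast
      ring
    have hcancel : (qhat (ι j) * (‖ehat j‖ : ℂ)) * (‖ehat j‖ : ℂ)
        = ((lam : ℂ) * ehat j) * (‖ehat j‖ : ℂ) := by
      have h2 := congrArg (· * ehat j) heq
      rw [mul_assoc, hsq] at h2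
      push_cast at h2 ⊢
      rw [show qhat (ι j) * (‖ehat j‖ : ℂ) * (‖ehat j‖ : ℂ)
          = qhat (ι j) * ((‖ehat j‖ : ℂ))^2 by ring, h2]
      ring
    exact mul_right_cancel₀ habse hcancel
end
end

section
/- Let γ > 0 and let q, x ∈ ℂ^N with ‖q‖_A^* ≤ γ. Suppose x = Σ_{k=1}^K c_k a(f_k, φ_k) with c_k > 0, f_k ∈ [0,1), φ_k ∈ [0,2π), and Σ_{k=1}^K c_k = ‖x‖_A (the decomposition achieves the atomic norm). If ⟨q, x⟩_ℝ = γ‖x‖_A, then ⟨q, a(f_k, 0)⟩ = γ · e^{iφ_k} for every k = 1,…,K. -/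
noncomputable section

lemma span_lemma (N : ℕ) (hN : 0 < N) (x : Fin N → ℂ) :
    ∃ z : Fin N → ℂ, ∀ t, x t = ∑ j, z j * atom N ((j : ℕ) / N) 0 t := by
  set μ : Fin N → ℂ := fun j => Complex.exp (Complex.I * ((2 * Real.pi * ((j:ℕ)/N) : ℝ) : ℂ)) with hμ
  have hatom : ∀ (j t : Fin N), atom N ((j:ℕ)/N) 0 t = μ j ^ (t:ℕ) := by
    intro j t
    rw [hμ]
    simp only [atom, ← Complex.exp_nat_mul]
    congr 1
    push_cast
    ring
  have hinj : Function.Injective μ := by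
    intro j k h
    rw [hμ] at h
    simp only at h
    rw [Complex.exp_eq_exp_iff_exists_int] at h
    obtain ⟨n, hn⟩ := h
    have h2 : (2 * Real.pi * ((j:ℕ)/N) : ℝ) = (2 * Real.pi * ((k:ℕ)/N) : ℝ) + n * (2 * Real.pi) := by
      have := hn
      rw [show ((n:ℂ) * (2 * Real.pi * Complex.I)) = Complex.I * (((n : ℝ) * (2*Real.pi) : ℝ) : ℂ) by
        push_cast; ring, ← mul_add] at this
      have h3 := mul_left_cancel₀ Complex.I_ne_zero this
      exact_mod_cast congrArg Complex.re h3
    have hπ := Real.pi_pos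
    have hjN : ((j:ℕ):ℝ)/N < 1 := by
      rw [div_lt_one (by positivity)]; exact_mod_cast j.2
    have hkN : ((k:ℕ):ℝ)/N < 1 := by
      rw [div_lt_one (by positivity)]; exact_mod_cast k.2
    have hj0 : (0:ℝ) ≤ ((j:ℕ):ℝ)/N := by positivity
    have hk0 : (0:ℝ) ≤ ((k:ℕ):ℝ)/N := by positivity
    have hn0 : n = 0 := by
      have hlt : |(n:ℝ)| < 1 := by
        have : (n:ℝ) = ((j:ℕ):ℝ)/N - ((k:ℕ):ℝ)/N := by
          field_simp at h2 ⊢; nlinarith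
        rw [this, abs_lt]; constructor <;> nlinarith
      obtain ⟨ha, hb⟩ := abs_lt.mp hlt
      have ha' : -1 < n := by exact_mod_cast ha
      have hb' : n < 1 := by exact_mod_cast hb
      omega
    rw [hn0] at h2
    have heqd : ((j:ℕ):ℝ)/N = ((k:ℕ):ℝ)/N := by nlinarith
    have heqn : ((j:ℕ):ℝ) = ((k:ℕ):ℝ) := by
      field_simp at heqd; exact_mod_cast heqd
    exact Fin.ext (by exact_mod_cast heqn)
  set M : Matrix (Fin N) (Fin N) ℂ := Matrix.of fun t j => μ j ^ (t:ℕ) with hM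
  have hdet : M.det ≠ 0 := by
    have : M = (Matrix.vandermonde μ).transpose := by
      ext t j; simp [hM, Matrix.vandermonde]
    rw [this, Matrix.det_transpose, Matrix.det_vandermonde]
    apply Finset.prod_ne_zero_iff.mpr
    intro i _
    apply Finset.prod_ne_zero_iff.mpr
    intro j hj
    have : i ≠ j := by rintro rfl; simp at hj
    exact sub_ne_zero.mpr fun h => this (hinj h.symm)
  refine ⟨M⁻¹.mulVec x, fun t => ?_⟩
  have : M.mulVec (M⁻¹.mulVec x) = x := by
    rw [Matrix.mulVec_mulVec, Matrix.mul_nonsing_inv _ (isUnit_iff_ne_zero.mpr hdet), Matrix.one_mulVec]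
  conv_lhs => rw [← this]
  simp [Matrix.mulVec, dotProduct, hM, hatom, mul_comm]

def decompSet (N : ℕ) (x : Fin N → ℂ) : Set ℝ :=
  { r : ℝ | ∃ (K : ℕ) (c : Fin K → ℝ) (f : Fin K → ℝ) (φ : Fin K → ℝ),
    (∀ k, 0 ≤ c k) ∧ (∀ k, f k ∈ Set.Ico (0 : ℝ) 1) ∧
    (∀ k, φ k ∈ Set.Ico (0 : ℝ) (2 * Real.pi)) ∧
    (x = ∑ k, fun t => (c k : ℂ) * atom N (f k) (φ k) t) ∧ r = ∑ k, c k }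

lemma atomicNorm_eq (N : ℕ) (x : Fin N → ℂ) : atomicNorm N x = sInf (decompSet N x) := rfl

lemma atom_abs (N : ℕ) (f φ : ℝ) (t : Fin N) : ‖atom N f φ t‖ = 1 := by
  simp [atom, Complex.norm_exp]

lemma atom_phase (N : ℕ) (f φ : ℝ) (t : Fin N) :
    atom N f φ t = Complex.exp (Complex.I * (φ : ℂ)) * atom N f 0 t := by
  simp only [atom, ← Complex.exp_add]
  congr 1
  push_cast
  ring

-- phase normalization: z = |z| exp(I φ) with φ ∈ [0, 2π)
lemma phase_normalize (z : ℂ) : ∃ φ : ℝ, φ ∈ Set.Ico (0:ℝ) (2*Real.pi) ∧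
    z = (‖z‖ : ℂ) * Complex.exp (Complex.I * (φ : ℂ)) := by
  have hπ := Real.pi_pos
  rcases eq_or_ne z 0 with rfl | hz
  · exact ⟨0, ⟨le_refl _, by positivity⟩, by simp⟩
  · refine ⟨if 0 ≤ z.arg then z.arg else z.arg + 2*Real.pi, ?_, ?_⟩
    · have h1 := Complex.arg_le_pi z
      have h2 := Complex.neg_pi_lt_arg z
      split_ifs with h
      · exact ⟨h, by nlinarith⟩
      · constructor <;> nlinarith
    · have key : Complex.exp (Complex.I * ((if 0 ≤ z.arg then z.arg else z.arg + 2*Real.pi : ℝ) : ℂ))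
          = Complex.exp (Complex.I * (z.arg : ℂ)) := by
        split_ifs with h
        · rfl
        · push_cast
          rw [mul_add, Complex.exp_add]
          rw [show Complex.I * ((2:ℂ)*Real.pi) = (1:ℤ) * (2*Real.pi*Complex.I) by push_cast; ring]
          rw [Complex.exp_int_mul_two_pi_mul_I]
          ring
      rw [key, show Complex.I * (z.arg : ℂ) = (z.arg : ℂ) * Complex.I by ring,
        Complex.norm_mul_exp_arg_mul_I]


lemma decompSet_nonempty (N : ℕ) (hN : 0 < N) (x : Fin N → ℂ) : (decompSet N x).Nonempty := by
  obtain ⟨z, hz⟩ := span_lemma N hN x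
  choose φ hφ hzeq using fun j => phase_normalize (z j)
  refine ⟨∑ j, ‖z j‖, N, fun j => ‖z j‖, fun j => (j:ℕ)/N, φ,
    fun j => norm_nonneg _, fun j => ⟨by positivity, ?_⟩, hφ, ?_, rfl⟩
  · rw [div_lt_one (by exact_mod_cast hN)]; exact_mod_cast j.2
  · funext t
    rw [hz t, Finset.sum_apply]
    refine Finset.sum_congr rfl fun j _ => ?_
    conv_rhs => rw [atom_phase]
    rw [← mul_assoc, ← hzeq j]

lemma mem_decompSet_bound (N : ℕ) (x : Fin N → ℂ) (r : ℝ) (hr : r ∈ decompSet N x) :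
    ∀ t, ‖x t‖ ≤ r := by
  obtain ⟨K, c, f, φ, hc, _, _, hx, hrs⟩ := hr
  intro t
  have : x t = ∑ k, (c k : ℂ) * atom N (f k) (φ k) t := by rw [hx, Finset.sum_apply]
  rw [this, hrs]
  calc ‖∑ k, (c k : ℂ) * atom N (f k) (φ k) t‖
      ≤ ∑ k, ‖(c k : ℂ) * atom N (f k) (φ k) t‖ := by
        exact norm_sum_le _ _
    _ = ∑ k, c k := by
        refine Finset.sum_congr rfl fun k _ => ?_
        rw [norm_mul, atom_abs, mul_one, Complex.norm_real, Real.norm_of_nonneg (hc k)]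

lemma abs_le_atomicNorm (N : ℕ) (hN : 0 < N) (x : Fin N → ℂ) (t : Fin N) :
    ‖x t‖ ≤ atomicNorm N x := by
  rw [atomicNorm_eq]
  exact le_csInf (decompSet_nonempty N hN x) (fun r hr => mem_decompSet_bound N x r hr t)

lemma atomicNorm_atom_le_one (N : ℕ) (f φ : ℝ) (hf : f ∈ Set.Ico (0:ℝ) 1)
    (hφ : φ ∈ Set.Ico (0:ℝ) (2*Real.pi)) : atomicNorm N (atom N f φ) ≤ 1 := by
  rw [atomicNorm_eq]
  refine csInf_le ⟨0, fun r hr => ?_⟩ ?_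
  · obtain ⟨K, c, _, _, hc, _, _, _, hrs⟩ := hr
    rw [hrs]; exact Finset.sum_nonneg fun k _ => hc k
  · exact ⟨1, fun _ => 1, fun _ => f, fun _ => φ, fun _ => zero_le_one, fun _ => hf, fun _ => hφ,
      by funext t; simp, by simp⟩

lemma atom_phase_period (N : ℕ) (f ψ : ℝ) (n : ℤ) :
    atom N f (ψ + 2 * Real.pi * n) = atom N f ψ := by
  funext t
  simp only [atom]
  rw [show ((2 * Real.pi * f * (t:ℕ) + (ψ + 2 * Real.pi * n) : ℝ) : ℂ)
      = ((2 * Real.pi * f * (t:ℕ) + ψ : ℝ) : ℂ) + (n : ℂ) * (2 * Real.pi) by push_cast; ring]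
  rw [mul_add, Complex.exp_add]
  rw [show Complex.I * ((n:ℂ) * (2*Real.pi)) = (n:ℂ) * (2*Real.pi*Complex.I) by ring]
  rw [Complex.exp_int_mul_two_pi_mul_I]
  ring

lemma dual_bddAbove (N : ℕ) (hN : 0 < N) (q : Fin N → ℂ) :
    BddAbove { r : ℝ | ∃ x : Fin N → ℂ, atomicNorm N x ≤ 1 ∧ r = rinner N q x } := by
  refine ⟨∑ t, ‖q t‖, fun r hr => ?_⟩
  obtain ⟨x, hx1, rfl⟩ := hr
  calc rinner N q x ≤ ‖cinner N q x‖ := Complex.re_le_norm _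
    _ ≤ ∑ t, ‖q t * (starRingEnd ℂ) (x t)‖ := norm_sum_le _ _
    _ ≤ ∑ t, ‖q t‖ := by
        refine Finset.sum_le_sum fun t _ => ?_
        rw [norm_mul, Complex.norm_conj]
        calc ‖q t‖ * ‖x t‖
            ≤ ‖q t‖ * 1 := by
              refine mul_le_mul_of_nonneg_left ?_ (norm_nonneg _)
              exact (abs_le_atomicNorm N hN x t).trans hx1
          _ = _ := mul_one _

lemma rinner_atom_le (N : ℕ) (hN : 0 < N) (γ : ℝ) (q : Fin N → ℂ)
    (hq : dualAtomicNorm N q ≤ γ) (f : ℝ) (hf : f ∈ Set.Ico (0:ℝ) 1) (ψ : ℝ) :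
    rinner N q (atom N f ψ) ≤ γ := by
  have hπ := Real.pi_pos
  set n : ℤ := ⌊ψ / (2 * Real.pi)⌋ with hn
  set ψ' : ℝ := ψ - 2 * Real.pi * n with hψ'
  have hmem : ψ' ∈ Set.Ico (0:ℝ) (2*Real.pi) := by
    have h2π : (0:ℝ) < 2 * Real.pi := by positivity
    have h1 : (n:ℝ) * (2 * Real.pi) ≤ ψ := by
      rw [hn]; exact (le_div_iff₀ h2π).mp (Int.floor_le _)
    have h2 : ψ < ((n:ℝ) + 1) * (2 * Real.pi) := by
      rw [hn]; exact (div_lt_iff₀ h2π).mp (Int.lt_floor_add_one _)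
    constructor
    · rw [hψ']; nlinarith
    · rw [hψ']; nlinarith
  have hatom : atom N f ψ = atom N f ψ' := by
    rw [show ψ = ψ' + 2 * Real.pi * n by rw [hψ']; ring]
    exact atom_phase_period N f ψ' n
  rw [hatom]
  refine le_trans (le_csSup (dual_bddAbove N hN q) ?_) hq
  exact ⟨atom N f ψ', atomicNorm_atom_le_one N f ψ' hf hmem, rfl⟩

lemma cinner_atom_shift (N : ℕ) (q : Fin N → ℂ) (f ψ : ℝ) :
    cinner N q (atom N f ψ) = Complex.exp (-(Complex.I * (ψ:ℂ))) * cinner N q (atom N f 0) := by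
  simp only [cinner, Finset.mul_sum]
  refine Finset.sum_congr rfl fun t _ => ?_
  conv_lhs => rw [atom_phase]
  rw [map_mul, ← Complex.exp_conj]
  simp only [map_mul, Complex.conj_I, Complex.conj_ofReal]
  ring

/-- If `‖q‖_A^* ≤ γ`, `x = Σ_k c_k a(f_k,φ_k)` is a decomposition achieving the atomic
norm, and `⟨q,x⟩_ℝ = γ‖x‖_A`, then `⟨q, a(f_k,0)⟩ = γ e^{iφ_k}` for every `k`. -/
theorem dual_polynomial_peaks
    (N : ℕ) (hN : 0 < N) (γ : ℝ) (hγ : 0 < γ)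
    (q x : Fin N → ℂ) (hq : dualAtomicNorm N q ≤ γ)
    (K : ℕ) (c f φ : Fin K → ℝ)
    (hc : ∀ k, 0 < c k)
    (hf : ∀ k, f k ∈ Set.Ico (0 : ℝ) 1)
    (hφ : ∀ k, φ k ∈ Set.Ico (0 : ℝ) (2 * Real.pi))
    (hdecomp : x = ∑ k, fun t => (c k : ℂ) * atom N (f k) (φ k) t)
    (hachieve : ∑ k, c k = atomicNorm N x)
    (heq : rinner N q x = γ * atomicNorm N x) :
    ∀ k, cinner N q (atom N (f k) 0) = (γ : ℂ) * Complex.exp (Complex.I * (φ k : ℂ)) := by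
  -- decompose the inner product
  have hx : ∀ t, x t = ∑ k, (c k : ℂ) * atom N (f k) (φ k) t := by
    intro t; rw [hdecomp, Finset.sum_apply]
  have hcx : cinner N q x = ∑ k, (c k : ℂ) * cinner N q (atom N (f k) (φ k)) := by
    simp only [cinner, hx, map_sum, map_mul, Complex.conj_ofReal, Finset.mul_sum]
    rw [Finset.sum_comm]
    exact Finset.sum_congr rfl fun k _ => Finset.sum_congr rfl fun t _ => by ring
  have hrx : rinner N q x = ∑ k, c k * rinner N q (atom N (f k) (φ k)) := by
    simp only [rinner, hcx, Complex.re_sum]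
    exact Finset.sum_congr rfl fun k _ => by rw [Complex.re_ofReal_mul]
  -- each term attains γ
  have hterm : ∀ k, rinner N q (atom N (f k) (φ k)) = γ := by
    have hsum0 : ∑ k, c k * (γ - rinner N q (atom N (f k) (φ k))) = 0 := by
      simp only [mul_sub]
      rw [Finset.sum_sub_distrib, ← hrx, ← Finset.sum_mul, hachieve, heq]
      ring
    have hnn : ∀ k ∈ Finset.univ, 0 ≤ c k * (γ - rinner N q (atom N (f k) (φ k))) := by
      intro k _
      have := rinner_atom_le N hN γ q hq (f k) (hf k) (φ k)
      have := (hc k).le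
      nlinarith
    intro k
    have := (Finset.sum_eq_zero_iff_of_nonneg hnn).mp hsum0 k (Finset.mem_univ k)
    have hck := hc k
    nlinarith [this]
  intro k
  set z := cinner N q (atom N (f k) 0) with hz
  -- |z| ≤ γ
  have habs : ‖z‖ ≤ γ := by
    have h1 := rinner_atom_le N hN γ q hq (f k) (hf k) (Complex.arg z)
    rw [rinner, cinner_atom_shift] at h1
    have h2 : Complex.exp (-(Complex.I * ((z.arg : ℝ) : ℂ))) * z = (‖z‖ : ℂ) := by
      nth_rewrite 2 [(Complex.norm_mul_exp_arg_mul_I z).symm]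
      rw [← mul_assoc, mul_comm (Complex.exp _) ((‖z‖ : ℂ)), mul_assoc,
        ← Complex.exp_add,
        show -(Complex.I * ((z.arg:ℝ):ℂ)) + (z.arg:ℂ) * Complex.I = 0 by push_cast; ring,
        Complex.exp_zero, mul_one]
    rw [← hz, h2] at h1
    simpa using h1
  -- Re(exp(-iφk) z) = γ
  have hre : (Complex.exp (-(Complex.I * ((φ k : ℝ) : ℂ))) * z).re = γ := by
    have := hterm k
    rw [rinner, cinner_atom_shift, ← hz] at this
    exact this
  set w := Complex.exp (-(Complex.I * ((φ k : ℝ) : ℂ))) * z with hw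
  have habsw : ‖w‖ = ‖z‖ := by
    rw [hw, norm_mul, Complex.norm_exp]
    simp
  have hwim : w.im = 0 := by
    have h1 : ‖w‖ ≤ γ := by rw [habsw]; exact habs
    have h2 : w.re ^ 2 + w.im ^ 2 = ‖w‖ ^ 2 := by
      rw [Complex.sq_norm, Complex.normSq_apply]; ring
    nlinarith [norm_nonneg w]
  have hwγ : w = (γ : ℂ) := Complex.ext (by rw [hre]; simp) (by rw [hwim]; simp)
  have : Complex.exp (Complex.I * ((φ k : ℝ) : ℂ)) * w = z := by
    rw [hw, ← mul_assoc, ← Complex.exp_add]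
    simp
  rw [hwγ] at this
  rw [← this]
  ring
end
end

section
/- Complex soft-thresholding solves the ℓ₁-regularized denoising problem: let λ > 0 and v ∈ ℂ^α, and define ê ∈ ℂ^α componentwise by ê_j = (|v_j| − λ)·(v_j/|v_j|) if |v_j| > λ, and ê_j = 0 otherwise. Then for every e ∈ ℂ^α, λ‖ê‖₁ + ½‖v − ê‖₂² ≤ λ‖e‖₁ + ½‖v − e‖₂², with equality only when e = ê; i.e., ê is the unique minimizer of e ↦ λ‖e‖₁ + ½‖v − e‖₂² over ℂ^α. -/
set_option maxHeartbeats 1000000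

noncomputable section

open Complex

lemma scalar_key (lam : ℝ) (hlam : 0 < lam) (v w : ℂ)
    (hw : w = if lam < ‖v‖ then
      ((‖v‖ - lam : ℝ) : ℂ) * (v / (‖v‖ : ℂ)) else 0)
    (z : ℂ) :
    lam * ‖w‖ + (1/2) * ‖v - w‖ ^ 2 ≤
      lam * ‖z‖ + (1/2) * ‖v - z‖ ^ 2 ∧
    (lam * ‖w‖ + (1/2) * ‖v - w‖ ^ 2 =
      lam * ‖z‖ + (1/2) * ‖v - z‖ ^ 2 → z = w) := by
  set a := ‖v‖ with ha
  set t := ‖z‖ with ht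
  set r := (v * (starRingEnd ℂ) z).re with hrdef
  have ha0 : 0 ≤ a := norm_nonneg v
  have ht0 : 0 ≤ t := norm_nonneg z
  have hr : r ≤ a * t := by
    have h1 : |r| ≤ ‖v * (starRingEnd ℂ) z‖ := Complex.abs_re_le_norm _
    rw [norm_mul, Complex.norm_conj] at h1
    exact le_trans (le_abs_self r) h1
  have hvz : ‖v - z‖ ^ 2 = a ^ 2 - 2 * r + t ^ 2 := by
    rw [Complex.sq_norm, Complex.normSq_sub, ← Complex.sq_norm v, ← Complex.sq_norm z]
    ring
  by_cases h : lam < a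
  · -- soft threshold case
    have ha0' : (0:ℝ) < a := lt_trans hlam h
    have haC : (a : ℂ) ≠ 0 := by exact_mod_cast ne_of_gt ha0'
    rw [hw, if_pos h]
    have haw : ‖((a - lam : ℝ) : ℂ) * (v / (a : ℂ))‖ = a - lam := by
      rw [norm_mul, norm_div, Complex.norm_real, Real.norm_eq_abs, Complex.norm_real, Real.norm_eq_abs, ← ha,
        abs_of_pos (by linarith), abs_of_pos ha0']
      field_simp
    have hvw : v - ((a - lam : ℝ) : ℂ) * (v / (a : ℂ)) = ((lam / a : ℝ) : ℂ) * v := by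
      push_cast
      field_simp
      ring
    have havw : ‖v - ((a - lam : ℝ) : ℂ) * (v / (a : ℂ))‖ = lam := by
      rw [hvw, norm_mul, Complex.norm_real, Real.norm_eq_abs, ← ha, abs_of_pos (by positivity)]
      field_simp
    rw [haw, havw, hvz]
    constructor
    · nlinarith [sq_nonneg (t - (a - lam)), hr]
    · intro heq
      have e2 : a * t = r := by nlinarith [sq_nonneg (t - (a - lam))]
      have e1 : t = a - lam := by nlinarith [sq_nonneg (t - (a - lam))]
      have hzv : (a : ℂ) * z = (t : ℂ) * v := by
        have hre : (z * (starRingEnd ℂ) v).re = r := by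
          rw [hrdef, ← Complex.conj_re (z * (starRingEnd ℂ) v)]
          simp [mul_comm]
        have hns : Complex.normSq ((a : ℂ) * z - (t : ℂ) * v) = 0 := by
          rw [Complex.normSq_sub]
          simp only [Complex.normSq_mul, Complex.normSq_ofReal]
          have : ((a:ℂ) * z * (starRingEnd ℂ) ((t:ℂ) * v)).re = a * t * r := by
            rw [map_mul]
            have : (a:ℂ) * z * ((starRingEnd ℂ) (t:ℂ) * (starRingEnd ℂ) v)
                = ((a:ℂ) * (t:ℂ)) * (z * (starRingEnd ℂ) v) := by
              rw [Complex.conj_ofReal]; ring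
            rw [this, ← Complex.ofReal_mul, Complex.re_ofReal_mul, hre]
          rw [this, ← Complex.sq_norm z, ← Complex.sq_norm v, ← ht, ← ha]
          nlinarith [e2]
        have h0 := Complex.normSq_eq_zero.mp hns
        have := sub_eq_zero.mp h0
        linear_combination this
      field_simp
      rw [mul_comm] at hzv
      rw [hzv, e1]
  · -- zero case
    rw [hw, if_neg h]
    push_neg at h
    simp only [norm_zero, sub_zero, mul_zero, zero_add]
    rw [hvz]
    have hat : a * t ≤ lam * t := mul_le_mul_of_nonneg_right h ht0
    constructor
    · linarith [sq_nonneg t]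
    · intro heq
      have h2 : t ^ 2 = 0 := le_antisymm (by linarith) (sq_nonneg t)
      have htz : t = 0 := by
        have := sq_eq_zero_iff.mp h2
        exact this
      exact norm_eq_zero.mp htz

/-- Complex soft-thresholding solves the `ℓ₁`-regularized denoising problem: with
`ê_j = (|v_j| − λ)·(v_j/|v_j|)` if `|v_j| > λ` and `ê_j = 0` otherwise, `ê` is the
unique minimizer of `e ↦ λ‖e‖₁ + ½‖v − e‖₂²` over `ℂ^α`. -/
theorem soft_thresholding_minimizer
    (α : ℕ) (lam : ℝ) (hlam : 0 < lam) (v : Fin α → ℂ)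
    (ehat : Fin α → ℂ)
    (hehat : ∀ j, ehat j =
      if lam < ‖v j‖ then
        ((‖v j‖ - lam : ℝ) : ℂ) * (v j / (‖v j‖ : ℂ))
      else 0) :
    ∀ e : Fin α → ℂ,
      (lam * l1 α ehat + (1 / 2) * l2sq α (fun j => v j - ehat j) ≤
        lam * l1 α e + (1 / 2) * l2sq α (fun j => v j - e j)) ∧
      (lam * l1 α ehat + (1 / 2) * l2sq α (fun j => v j - ehat j) =
        lam * l1 α e + (1 / 2) * l2sq α (fun j => v j - e j) → e = ehat) := by
  intro e
  have expand : ∀ f : Fin α → ℂ,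
      lam * l1 α f + (1 / 2) * l2sq α (fun j => v j - f j) =
        ∑ j, (lam * ‖f j‖ + (1 / 2) * ‖v j - f j‖ ^ 2) := by
    intro f
    simp only [l1, l2sq, Finset.mul_sum]
    rw [← Finset.sum_add_distrib]
  have key := fun j => scalar_key lam hlam (v j) (ehat j) (hehat j)
  constructor
  · rw [expand ehat, expand e]
    exact Finset.sum_le_sum fun j _ => (key j (e j)).1
  · intro heq
    rw [expand ehat, expand e] at heq
    have hpt := (Finset.sum_eq_sum_iff_of_le (fun j _ => (key j (e j)).1)).mp heq
    funext j
    exact (key j (e j)).2 (hpt j (Finset.mem_univ j))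
end
end

section
/- Closed form of the ADMM Toeplitz update: let N be a positive integer, ρ > 0, γ > 0, and let Ψ₀, Υ₀ ∈ ℂ^{N×N} be Hermitian. Define h on { u ∈ ℂ^N : u_0 ∈ ℝ } by h(u) = (γ/2)·u_0 − Re Tr(Υ₀ · Toep(u)) + (ρ/2)·‖Ψ₀ − Toep(u)‖_F². Then h attains its minimum at the unique point u* given by u*_0 = (1/N)·Tr_0(Ψ₀ + Υ₀/ρ) − γ/(2Nρ) and u*_j = (1/(N−j))·Tr_j(Ψ₀ + Υ₀/ρ) for j = 1,…,N−1. -/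
noncomputable section

/-- The Hermitian Toeplitz matrix whose first column is `u` (for `u_0` real):
`(Toep u)_{jk} = u_{j−k}` for `j ≥ k` and `conj(u_{k−j})` for `j < k`. -/
def Toep (N : ℕ) (u : Fin N → ℂ) : Matrix (Fin N) (Fin N) ℂ :=
  Matrix.of fun j k =>
    if k.val ≤ j.val then u ⟨j.val - k.val, lt_of_le_of_lt (Nat.sub_le _ _) j.isLt⟩
    else (starRingEnd ℂ) (u ⟨k.val - j.val, lt_of_le_of_lt (Nat.sub_le _ _) k.isLt⟩)

/-- `Tr_j(M) = Σ_{k=0}^{N−1−j} M_{k+j,k}`, the sum of the entries on the `j`-th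
subdiagonal of `M` (so `Tr_0` is the ordinary trace). -/
def subdiagTr (N : ℕ) (M : Matrix (Fin N) (Fin N) ℂ) (j : ℕ) : ℂ :=
  ∑ k : Fin N, if h : k.val + j < N then M ⟨k.val + j, h⟩ k else 0

/-- Squared Frobenius norm `‖M‖_F² = Σ_{j,k} |M_{jk}|²`. -/
def frobSq (N : ℕ) (M : Matrix (Fin N) (Fin N) ℂ) : ℝ :=
  ∑ j, ∑ k, ‖M j k‖ ^ 2

lemma tri_sum {N : ℕ} [NeZero N] {M : Type*} [AddCommMonoid M]
    (f : (j : Fin N) → (k : Fin N) → M) :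
    ∑ d : Fin N, ∑ k : Fin N, (if h : k.val + d.val < N then f ⟨k.val + d.val, h⟩ k else 0)
    = ∑ j : Fin N, ∑ k : Fin N, (if k.val ≤ j.val then f j k else 0) := by
  rw [Finset.sum_comm]
  rw [Finset.sum_comm (s := Finset.univ) (t := Finset.univ)
    (f := fun j k => if k.val ≤ j.val then f j k else 0)]
  refine Finset.sum_congr rfl (fun k _ => ?_)
  refine Fintype.sum_equiv (Equiv.addLeft k) _ _ (fun d => ?_)
  show _ = (if k.val ≤ (k + d : Fin N).val then f (k + d) k else 0)
  by_cases h : k.val + d.val < N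
  · have hv : ((k + d : Fin N)).val = k.val + d.val := by
      rw [Fin.add_def]; exact Nat.mod_eq_of_lt h
    rw [dif_pos h, if_pos (by omega)]
    congr 1
    exact (Fin.ext hv).symm
  · have hm : (k.val + d.val) % N = k.val + d.val - N := by
      rw [Nat.mod_eq_sub_mod (by omega)]; exact Nat.mod_eq_of_lt (by omega)
    have hv : ((k + d : Fin N)).val = k.val + d.val - N := by
      rw [Fin.add_def]; exact hm
    rw [dif_neg h, if_neg (by omega)]

lemma dsum_const {N : ℕ} (d : ℕ) (z : ℂ) :
    ∑ k : Fin N, (if _ : k.val + d < N then z else 0) = ((N - d : ℕ) : ℂ) * z := by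
  simp only [dite_eq_ite]
  rw [Fin.sum_univ_eq_sum_range (fun n => if n + d < N then z else 0)]
  rw [← Finset.sum_subset (Finset.range_subset_range.mpr (Nat.sub_le N d))
    (fun x hx hx2 => if_neg (by simp only [Finset.mem_range] at hx hx2; omega))]
  rw [Finset.sum_congr rfl (fun x hx => if_pos (by simp only [Finset.mem_range] at hx; omega)),
    Finset.sum_const, Finset.card_range, nsmul_eq_mul]

lemma entry_id (ρ : ℝ) (hρ : ρ ≠ 0) (ψ υ x y : ℂ) :
    ρ/2 * ‖ψ - x‖ ^ 2 - ((starRingEnd ℂ) υ * x).re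
      - (ρ/2 * ‖ψ - y‖ ^ 2 - ((starRingEnd ℂ) υ * y).re)
      - ρ/2 * ‖x - y‖ ^ 2
    = ρ * ((starRingEnd ℂ) (y - (ψ + (ρ:ℂ)⁻¹ * υ)) * (x - y)).re := by
  rw [← Complex.ofReal_inv]
  simp only [Complex.sq_norm, Complex.normSq_apply, Complex.mul_re, Complex.sub_re,
    Complex.sub_im, Complex.add_re, Complex.add_im, Complex.conj_re, Complex.conj_im,
    Complex.ofReal_re, Complex.ofReal_im, Complex.mul_im]
  field_simp
  ring

/-- per-diagonal coefficient function -/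
def cfun (N : ℕ) (A : Matrix (Fin N) (Fin N) ℂ) (v w : Fin N → ℂ) (j k : Fin N) : ℝ :=
  ((starRingEnd ℂ) (v ⟨j.val - k.val, lt_of_le_of_lt (Nat.sub_le _ _) j.isLt⟩ - A j k) *
    w ⟨j.val - k.val, lt_of_le_of_lt (Nat.sub_le _ _) j.isLt⟩).re

lemma inner_eval {N : ℕ} (A : Matrix (Fin N) (Fin N) ℂ) (v w : Fin N → ℂ) (d : Fin N) :
    ∑ k : Fin N, (if h : k.val + d.val < N then cfun N A v w ⟨k.val + d.val, h⟩ k else 0)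
    = ((starRingEnd ℂ) (((N - d.val : ℕ) : ℂ) * v d - subdiagTr N A d.val) * w d).re := by
  have h1 : ∀ (k : Fin N) (h : k.val + d.val < N),
      cfun N A v w ⟨k.val + d.val, h⟩ k
        = ((starRingEnd ℂ) (v d - A ⟨k.val + d.val, h⟩ k) * w d).re := by
    intro k h
    have hidx : (⟨(⟨k.val + d.val, h⟩ : Fin N).val - k.val,
        lt_of_le_of_lt (Nat.sub_le _ _) (⟨k.val + d.val, h⟩ : Fin N).isLt⟩ : Fin N) = d := by
      apply Fin.ext; simp
    rw [cfun, hidx]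
  have h2 : ∑ k : Fin N, (if h : k.val + d.val < N then cfun N A v w ⟨k.val + d.val, h⟩ k else 0)
      = (∑ k : Fin N, (if h : k.val + d.val < N
          then (starRingEnd ℂ) (v d - A ⟨k.val + d.val, h⟩ k) * w d else 0)).re := by
    rw [Complex.re_sum]
    refine Finset.sum_congr rfl (fun k _ => ?_)
    by_cases h : k.val + d.val < N
    · rw [dif_pos h, dif_pos h, h1 k h]
    · rw [dif_neg h, dif_neg h, Complex.zero_re]
  rw [h2]
  congr 1
  have h3 : ∑ k : Fin N, (if h : k.val + d.val < N
        then (starRingEnd ℂ) (v d - A ⟨k.val + d.val, h⟩ k) * w d else 0)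
      = (∑ k : Fin N, (if h : k.val + d.val < N
          then (starRingEnd ℂ) (v d - A ⟨k.val + d.val, h⟩ k) else 0)) * w d := by
    rw [Finset.sum_mul]
    refine Finset.sum_congr rfl (fun k _ => ?_)
    by_cases h : k.val + d.val < N
    · rw [dif_pos h, dif_pos h]
    · rw [dif_neg h, dif_neg h, zero_mul]
  rw [h3]
  congr 1
  have h4 : ∑ k : Fin N, (if h : k.val + d.val < N
        then (starRingEnd ℂ) (v d - A ⟨k.val + d.val, h⟩ k) else 0)
      = (starRingEnd ℂ) (∑ k : Fin N, (if h : k.val + d.val < N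
          then (v d - A ⟨k.val + d.val, h⟩ k) else 0)) := by
    rw [map_sum]
    refine Finset.sum_congr rfl (fun k _ => ?_)
    by_cases h : k.val + d.val < N
    · rw [dif_pos h, dif_pos h]
    · rw [dif_neg h, dif_neg h, map_zero]
  rw [h4]
  congr 1
  have h5 : ∑ k : Fin N, (if h : k.val + d.val < N
        then (v d - A ⟨k.val + d.val, h⟩ k) else 0)
      = (∑ k : Fin N, (if _ : k.val + d.val < N then v d else 0))
        - (∑ k : Fin N, (if h : k.val + d.val < N then A ⟨k.val + d.val, h⟩ k else 0)) := by
    rw [← Finset.sum_sub_distrib]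
    refine Finset.sum_congr rfl (fun k _ => ?_)
    by_cases h : k.val + d.val < N
    · rw [dif_pos h, dif_pos h, dif_pos h]
    · rw [dif_neg h, dif_neg h, dif_neg h, sub_zero]
  rw [h5, dsum_const]
  rfl

lemma cross_eval {N : ℕ} [NeZero N] (A : Matrix (Fin N) (Fin N) ℂ) (hA : A.IsHermitian)
    (v w : Fin N → ℂ)
    (hDiag : ∀ d : Fin N, d.val ≠ 0 → ((N - d.val : ℕ) : ℂ) * v d - subdiagTr N A d.val = 0)
    (z0 : Fin N) (hz : z0.val = 0) :
    ∑ j : Fin N, ∑ k : Fin N, ((starRingEnd ℂ) (Toep N v j k - A j k) * Toep N w j k).re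
      = ((starRingEnd ℂ) ((N : ℂ) * v z0 - subdiagTr N A 0) * w z0).re := by
  have hA2 : ∀ j k, (starRingEnd ℂ) (A j k) = A k j := fun j k => by
    rw [← hA.apply j k]; exact star_star _
  have claim2a : ∀ j k : Fin N,
      ((starRingEnd ℂ) (Toep N v j k - A j k) * Toep N w j k).re
      = if k.val ≤ j.val then cfun N A v w j k else cfun N A v w k j := by
    intro j k
    by_cases h : k.val ≤ j.val
    · rw [if_pos h]
      simp only [Toep, Matrix.of_apply, if_pos h, cfun]
    · rw [if_neg h]
      simp only [Toep, Matrix.of_apply, if_neg h, cfun]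
      rw [← map_mul, Complex.conj_re]
      congr 2
      rw [map_sub, hA2 k j]
  have split : ∀ (P : Prop) [Decidable P] (a b : ℝ),
      (if P then a else b) = (if P then a else 0) + (if P then 0 else b) := by
    intro P _ a b; split <;> simp
  calc ∑ j : Fin N, ∑ k : Fin N, ((starRingEnd ℂ) (Toep N v j k - A j k) * Toep N w j k).re
      = ∑ j : Fin N, ∑ k : Fin N,
          ((if k.val ≤ j.val then cfun N A v w j k else 0)
            + (if k.val ≤ j.val then 0 else cfun N A v w k j)) := by
        refine Finset.sum_congr rfl fun j _ => Finset.sum_congr rfl fun k _ => ?_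
        rw [claim2a j k, split]
    _ = (∑ j : Fin N, ∑ k : Fin N, (if k.val ≤ j.val then cfun N A v w j k else 0))
        + (∑ j : Fin N, ∑ k : Fin N, (if k.val ≤ j.val then 0 else cfun N A v w k j)) := by
        rw [← Finset.sum_add_distrib]
        exact Finset.sum_congr rfl fun j _ => Finset.sum_add_distrib
    _ = (∑ j : Fin N, ∑ k : Fin N, (if k.val ≤ j.val then cfun N A v w j k else 0))
        + (∑ j : Fin N, ∑ k : Fin N,
            (if k.val ≤ j.val then (if j.val = k.val then 0 else cfun N A v w j k) else 0)) := by
        congr 1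
        rw [Finset.sum_comm]
        refine Finset.sum_congr rfl fun j _ => Finset.sum_congr rfl fun k _ => ?_
        split_ifs with h1 h2 h2 <;> first | rfl | omega
    _ = ((starRingEnd ℂ) (((N - z0.val : ℕ) : ℂ) * v z0 - subdiagTr N A z0.val) * w z0).re + 0 := by
        congr 1
        · rw [← tri_sum]
          rw [Finset.sum_congr rfl fun d _ => inner_eval A v w d]
          refine Finset.sum_eq_single z0 (fun d _ hd => ?_) (fun h => absurd (Finset.mem_univ _) h)
          rw [hDiag d (fun h0 => hd (Fin.ext (h0.trans hz.symm))), map_zero, zero_mul,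
            Complex.zero_re]
        · rw [← tri_sum]
          refine Finset.sum_eq_zero fun d _ => ?_
          by_cases hd : d.val = 0
          · refine Finset.sum_eq_zero fun k _ => ?_
            by_cases h : k.val + d.val < N
            · rw [dif_pos h, if_pos (by simp [hd])]
            · rw [dif_neg h]
          · have heq : (∑ k : Fin N, if h : k.val + d.val < N
                then (if (⟨k.val + d.val, h⟩ : Fin N).val = k.val then 0
                  else cfun N A v w ⟨k.val + d.val, h⟩ k) else 0)
                = ∑ k : Fin N, if h : k.val + d.val < N
                    then cfun N A v w ⟨k.val + d.val, h⟩ k else 0 := by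
              refine Finset.sum_congr rfl fun k _ => ?_
              by_cases h : k.val + d.val < N
              · rw [dif_pos h, dif_pos h, if_neg (by dsimp only; omega)]
              · rw [dif_neg h, dif_neg h]
            rw [heq, inner_eval A v w d, hDiag d hd, map_zero, zero_mul, Complex.zero_re]
    _ = ((starRingEnd ℂ) ((N : ℂ) * v z0 - subdiagTr N A 0) * w z0).re := by
        rw [add_zero, hz]
        norm_num

lemma comb5 {N : ℕ} (a b c d e f : Fin N → Fin N → ℝ)
    (h : ∀ j k, a j k - b j k - (c j k - d j k) - e j k = f j k) :
    (∑ j, ∑ k, a j k) - (∑ j, ∑ k, b j k) - ((∑ j, ∑ k, c j k) - (∑ j, ∑ k, d j k))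
      - (∑ j, ∑ k, e j k) = ∑ j, ∑ k, f j k := by
  simp only [← Finset.sum_sub_distrib]
  exact Finset.sum_congr rfl fun j _ => Finset.sum_congr rfl fun k _ => h j k

/-- Closed form of the ADMM Toeplitz update: on `{u : ℂ^N | u_0 ∈ ℝ}`, the function
`h(u) = (γ/2)u_0 − Re Tr(Υ₀ · Toep(u)) + (ρ/2)‖Ψ₀ − Toep(u)‖_F²` attains its minimum at
the unique point `u*` with `u*_0 = (1/N)Tr_0(Ψ₀ + Υ₀/ρ) − γ/(2Nρ)` and
`u*_j = (1/(N−j))Tr_j(Ψ₀ + Υ₀/ρ)` for `j = 1,…,N−1`. -/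
theorem admm_toeplitz_update_closed_form
    (N : ℕ) (hN : 0 < N) (ρ γ : ℝ) (hρ : 0 < ρ) (hγ : 0 < γ)
    (Ψ₀ Υ₀ : Matrix (Fin N) (Fin N) ℂ)
    (hΨ : Ψ₀.IsHermitian) (hΥ : Υ₀.IsHermitian)
    (ustar : Fin N → ℂ)
    (h0 : ustar ⟨0, hN⟩ =
      ((1 / (N : ℝ) : ℝ) : ℂ) * subdiagTr N (Ψ₀ + ((ρ : ℂ)⁻¹) • Υ₀) 0 -
        ((γ / (2 * N * ρ) : ℝ) : ℂ))
    (hj : ∀ j : Fin N, j.val ≠ 0 → ustar j =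
      ((1 / ((N : ℝ) - j.val) : ℝ) : ℂ) * subdiagTr N (Ψ₀ + ((ρ : ℂ)⁻¹) • Υ₀) j.val) :
    (ustar ⟨0, hN⟩).im = 0 ∧
    ∀ u : Fin N → ℂ, (u ⟨0, hN⟩).im = 0 → u ≠ ustar →
      γ / 2 * (ustar ⟨0, hN⟩).re - (Matrix.trace (Υ₀ * Toep N ustar)).re +
          ρ / 2 * frobSq N (Ψ₀ - Toep N ustar) <
      γ / 2 * (u ⟨0, hN⟩).re - (Matrix.trace (Υ₀ * Toep N u)).re +
          ρ / 2 * frobSq N (Ψ₀ - Toep N u) := by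
  haveI : NeZero N := ⟨hN.ne'⟩
  have hρ0 : ρ ≠ 0 := hρ.ne'
  set z0 : Fin N := ⟨0, hN⟩ with hz0def
  set A := Ψ₀ + ((ρ : ℂ)⁻¹) • Υ₀ with hAdef
  have hAH : A.IsHermitian := by
    rw [Matrix.IsHermitian, hAdef, Matrix.conjTranspose_add, Matrix.conjTranspose_smul]
    rw [hΨ.eq, hΥ.eq]
    congr 1
    have : star ((ρ : ℂ)⁻¹) = (ρ : ℂ)⁻¹ := by
      rw [Complex.star_def, map_inv₀, Complex.conj_ofReal]
    rw [this]
  have hDiag : ∀ d : Fin N, d.val ≠ 0 →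
      ((N - d.val : ℕ) : ℂ) * ustar d - subdiagTr N A d.val = 0 := by
    intro d hd
    rw [hj d hd]
    have h2 : ((N : ℝ) - d.val) ≠ 0 := by
      have := d.isLt
      have : (d.val : ℝ) < N := by exact_mod_cast d.isLt
      linarith
    have h1 : ((N - d.val : ℕ) : ℂ) = (((N : ℝ) - d.val : ℝ) : ℂ) := by
      push_cast [Nat.cast_sub d.isLt.le]
      ring
    rw [h1]
    rw [sub_eq_zero]
    rw [← mul_assoc]
    rw [show ((((N : ℝ) - d.val : ℝ)) : ℂ) * ((1 / ((N : ℝ) - d.val) : ℝ) : ℂ) = 1 by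
      rw [← Complex.ofReal_mul]; rw [mul_one_div, div_self h2]; rfl]
    rw [one_mul]
  have hE0 : (N : ℂ) * ustar z0 - subdiagTr N A 0 = ((-(γ/(2*ρ)) : ℝ) : ℂ) := by
    rw [h0]
    have hN0 : (N : ℂ) ≠ 0 := Nat.cast_ne_zero.mpr hN.ne'
    have hρC : (ρ : ℂ) ≠ 0 := Complex.ofReal_ne_zero.mpr hρ0
    have hNR : ((N : ℝ)) ≠ 0 := Nat.cast_ne_zero.mpr hN.ne'
    push_cast
    field_simp
    ring
  -- first conjunct
  have hv0 : (ustar z0).im = 0 := by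
    have him : (subdiagTr N A 0).im = 0 := by
      rw [subdiagTr, Complex.im_sum]
      refine Finset.sum_eq_zero fun k _ => ?_
      rw [dif_pos (show k.val + 0 < N by omega)]
      have hk : (⟨k.val + 0, show k.val + 0 < N by omega⟩ : Fin N) = k := Fin.ext (by simp)
      rw [hk]
      have := hAH.apply k k
      exact Complex.conj_eq_iff_im.mp this
    rw [h0]
    simp only [Complex.sub_im, Complex.mul_im, Complex.ofReal_im, Complex.ofReal_re, him]
    norm_num
  refine ⟨hv0, fun u hu hune => ?_⟩
  have htr : ∀ (M : Matrix (Fin N) (Fin N) ℂ), Matrix.trace (Υ₀ * M)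
      = ∑ j : Fin N, ∑ k : Fin N, (starRingEnd ℂ) (Υ₀ j k) * M j k := by
    intro M
    calc Matrix.trace (Υ₀ * M) = ∑ j : Fin N, ∑ k : Fin N, Υ₀ j k * M k j := by
          simp [Matrix.trace, Matrix.diag, Matrix.mul_apply]
      _ = ∑ k : Fin N, ∑ j : Fin N, Υ₀ j k * M k j := Finset.sum_comm
      _ = ∑ j : Fin N, ∑ k : Fin N, (starRingEnd ℂ) (Υ₀ j k) * M j k := by
          refine Finset.sum_congr rfl fun x _ => Finset.sum_congr rfl fun y _ => ?_
          congr 1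
          rw [← hΥ.apply x y]
          exact (star_star _).symm
  have hrtr : ∀ y : Fin N → ℂ, (Matrix.trace (Υ₀ * Toep N y)).re
      = ∑ j : Fin N, ∑ k : Fin N, ((starRingEnd ℂ) (Υ₀ j k) * Toep N y j k).re := by
    intro y
    rw [htr, Complex.re_sum]
    exact Finset.sum_congr rfl fun j _ => Complex.re_sum _ _
  have key : ∀ x : Fin N → ℂ,
      γ/2 * (x z0).re - (Matrix.trace (Υ₀ * Toep N x)).re + ρ/2 * frobSq N (Ψ₀ - Toep N x)
      - (γ/2 * (ustar z0).re - (Matrix.trace (Υ₀ * Toep N ustar)).re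
          + ρ/2 * frobSq N (Ψ₀ - Toep N ustar))
      = ρ/2 * frobSq N (Toep N x - Toep N ustar) := by
    intro x
    set w : Fin N → ℂ := fun i => x i - ustar i with hwdef
    have hTw : ∀ j k, Toep N w j k = Toep N x j k - Toep N ustar j k := by
      intro j k
      simp only [Toep, Matrix.of_apply, hwdef]
      split_ifs with h
      · rfl
      · exact map_sub _ _ _
    have cross := cross_eval A hAH ustar w hDiag z0 rfl
    rw [hE0] at cross
    have cross' : ∑ j : Fin N, ∑ k : Fin N,
        ((starRingEnd ℂ) (Toep N ustar j k - A j k) * Toep N w j k).re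
        = -(γ/(2*ρ)) * (w z0).re := by
      rw [cross, Complex.conj_ofReal, Complex.re_ofReal_mul]
    have ecomb : ∀ j k : Fin N,
        ρ/2 * ‖(Ψ₀ - Toep N x) j k‖ ^ 2
          - ((starRingEnd ℂ) (Υ₀ j k) * Toep N x j k).re
        - (ρ/2 * ‖(Ψ₀ - Toep N ustar) j k‖ ^ 2
          - ((starRingEnd ℂ) (Υ₀ j k) * Toep N ustar j k).re)
        - ρ/2 * ‖(Toep N x - Toep N ustar) j k‖ ^ 2
        = ρ * ((starRingEnd ℂ) (Toep N ustar j k - A j k) * Toep N w j k).re := by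
      intro j k
      rw [Matrix.sub_apply, Matrix.sub_apply, Matrix.sub_apply, hTw j k]
      have hA' : A j k = Ψ₀ j k + (ρ:ℂ)⁻¹ * Υ₀ j k := by
        rw [hAdef]; simp [Matrix.add_apply, Matrix.smul_apply, smul_eq_mul]
      rw [hA']
      exact entry_id ρ hρ0 (Ψ₀ j k) (Υ₀ j k) (Toep N x j k) (Toep N ustar j k)
    have ecombS : ρ/2 * frobSq N (Ψ₀ - Toep N x) - (Matrix.trace (Υ₀ * Toep N x)).re
        - (ρ/2 * frobSq N (Ψ₀ - Toep N ustar) - (Matrix.trace (Υ₀ * Toep N ustar)).re)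
        - ρ/2 * frobSq N (Toep N x - Toep N ustar)
        = ρ * ∑ j : Fin N, ∑ k : Fin N,
            ((starRingEnd ℂ) (Toep N ustar j k - A j k) * Toep N w j k).re := by
      rw [hrtr, hrtr]
      simp only [frobSq, Finset.mul_sum]
      exact comb5 _ _ _ _ _ _ ecomb
    have hw0 : (w z0).re = (x z0).re - (ustar z0).re := by
      rw [hwdef]; exact Complex.sub_re _ _
    have hcross2 : ρ * (∑ j : Fin N, ∑ k : Fin N,
        ((starRingEnd ℂ) (Toep N ustar j k - A j k) * Toep N w j k).re)
        = -(γ/2) * ((x z0).re - (ustar z0).re) := by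
      rw [cross', hw0]
      field_simp
    linarith [ecombS, hcross2]
  obtain ⟨dd, hdd⟩ := Function.ne_iff.mp hune
  have hpos : 0 < frobSq N (Toep N u - Toep N ustar) := by
    have hent : (Toep N u - Toep N ustar) dd z0 = u dd - ustar dd := by
      have h1 : z0.val ≤ dd.val := Nat.zero_le _
      simp only [Matrix.sub_apply, Toep, Matrix.of_apply, if_pos h1]
      congr 1 <;> exact congrArg _ (Fin.ext (by omega))
    rw [frobSq]
    refine Finset.sum_pos' (fun j _ => Finset.sum_nonneg fun k _ => sq_nonneg ‖(Toep N u - Toep N ustar) j k‖)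
      ⟨dd, Finset.mem_univ dd, ?_⟩
    refine Finset.sum_pos' (fun k _ => sq_nonneg ‖(Toep N u - Toep N ustar) dd k‖) ⟨z0, Finset.mem_univ _, ?_⟩
    rw [hent]
    have hne : u dd - ustar dd ≠ 0 := sub_ne_zero.mpr hdd
    exact pow_pos (norm_pos_iff.mpr hne) 2
  have hk := key u
  have hmul : 0 < ρ/2 * frobSq N (Toep N u - Toep N ustar) :=
    mul_pos (by linarith) hpos
  linarith [hk, hmul]
end
end

section
/- Closed form of the ADMM x-update with batch overlap: let N be a positive integer, Ω = {t_1 < … < t_α} and Ξ = {s_1 < … < s_A} subsets of {0,…,N−1}, ρ > 0, ζ > 0, z̃, e ∈ ℂ^α, x̄ ∈ ℂ^A, and ψ, υ ∈ ℂ^N. Define g(x) = ½‖z̃ − x(Ω) − e‖₂² + (ζ/2)‖x(Ξ) − x̄‖₂² − 2⟨υ, x⟩_ℝ + ρ‖x − ψ‖₂² for x ∈ ℂ^N. Then g attains its minimum over ℂ^N at the unique point x* given coordinatewise as follows: if t = t_j ∈ Ω and t = s_l ∈ Ξ, then x*_t = (z̃_j − e_j + ζ·x̄_l + 2ρ·ψ_t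 + 2·υ_t)/(2ρ + ζ + 1); if t = s_l ∈ Ξ and t ∉ Ω, then x*_t = (ζ·x̄_l + 2ρ·ψ_t + 2·υ_t)/(2ρ + ζ); if t = t_j ∈ Ω and t ∉ Ξ, then x*_t = (z̃_j − e_j + 2ρ·ψ_t + 2·υ_t)/(2ρ + 1); and if t ∉ Ω ∪ Ξ, then x*_t = ψ_t + υ_t/ρ. -/
noncomputable section

open scoped Classical

/-- extension of a vector indexed by a subset, by zero. -/
def indicC {N m : ℕ} (ι : Fin m → Fin N) (v : Fin m → ℂ) (t : Fin N) : ℂ :=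
  if h : ∃ j, ι j = t then v h.choose else 0

/-- real indicator of the range of `ι`. -/
def indicR {N m : ℕ} (ι : Fin m → Fin N) (t : Fin N) : ℝ :=
  if ∃ j, ι j = t then 1 else 0

lemma indicC_apply {N m : ℕ} (ι : Fin m → Fin N) (hinj : Function.Injective ι)
    (v : Fin m → ℂ) (j : Fin m) : indicC ι v (ι j) = v j := by
  have h : ∃ j', ι j' = ι j := ⟨j, rfl⟩
  simp only [indicC, dif_pos h]
  congr 1
  exact hinj h.choose_spec

lemma indicR_apply {N m : ℕ} (ι : Fin m → Fin N) (j : Fin m) :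
    indicR ι (ι j) = 1 := if_pos ⟨j, rfl⟩

lemma indicR_of_not {N m : ℕ} (ι : Fin m → Fin N) (t : Fin N)
    (h : ∀ j, ι j ≠ t) : indicR ι t = 0 := if_neg (by push_neg; exact h)

lemma indicR_nonneg {N m : ℕ} (ι : Fin m → Fin N) (t : Fin N) :
    0 ≤ indicR ι t := by unfold indicR; split <;> norm_num

lemma phi_diff (cΩ cΞ ρ ζ : ℝ) (c d u p w m : ℂ)
    (hm : ((cΩ/2 : ℝ) : ℂ) * c + ((ζ*cΞ/2 : ℝ) : ℂ) * d + u + ((ρ:ℝ) : ℂ) * p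
        = ((ρ + cΩ/2 + ζ*cΞ/2 : ℝ) : ℂ) * m) :
    (cΩ/2 * Complex.normSq (c - w) + ζ*cΞ/2 * Complex.normSq (w - d)
      - 2*(u * (starRingEnd ℂ) w).re + ρ * Complex.normSq (w - p))
    - (cΩ/2 * Complex.normSq (c - m) + ζ*cΞ/2 * Complex.normSq (m - d)
      - 2*(u * (starRingEnd ℂ) m).re + ρ * Complex.normSq (m - p))
    = (ρ + cΩ/2 + ζ*cΞ/2) * Complex.normSq (w - m) := by
  have h1 := congrArg Complex.re hm
  have h2 := congrArg Complex.im hm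
  simp only [Complex.add_re, Complex.add_im, Complex.mul_re, Complex.mul_im,
    Complex.ofReal_re, Complex.ofReal_im] at h1 h2
  simp only [Complex.normSq_apply, Complex.mul_re, Complex.sub_re, Complex.sub_im,
    Complex.conj_re, Complex.conj_im]
  linear_combination (-2*(w.re - m.re)) * h1 + (-2*(w.im - m.im)) * h2

lemma sum_indic {N m : ℕ} (ι : Fin m → Fin N) (hinj : Function.Injective ι)
    (F : Fin N → ℝ) :
    ∑ t, (if ∃ j, ι j = t then F t else 0) = ∑ j, F (ι j) := by
  rw [← Finset.sum_filter]
  rw [show Finset.univ.filter (fun t => ∃ j, ι j = t) = Finset.univ.image ι by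
    ext t; simp [eq_comm]]
  rw [Finset.sum_image (fun a _ b _ h => hinj h)]

/-- Closed form of the ADMM `x`-update with batch overlap: the function
`g(x) = ½‖z̃ − x(Ω) − e‖₂² + (ζ/2)‖x(Ξ) − x̄‖₂² − 2⟨υ,x⟩_ℝ + ρ‖x − ψ‖₂²`
attains its minimum over `ℂ^N` at the unique point `x*` described coordinatewise
according to membership of the coordinate in `Ω` and `Ξ`. -/
theorem admm_x_update_overlap_closed_form
    (N α A : ℕ) (hN : 0 < N)
    (ι : Fin α → Fin N) (hι : StrictMono ι)
    (κ : Fin A → Fin N) (hκ : StrictMono κ)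
    (ρ ζ : ℝ) (hρ : 0 < ρ) (hζ : 0 < ζ)
    (ztil e : Fin α → ℂ) (xbar : Fin A → ℂ) (ψ υ : Fin N → ℂ)
    (xstar : Fin N → ℂ)
    (hboth : ∀ (j : Fin α) (l : Fin A), ι j = κ l →
      xstar (ι j) = (ztil j - e j + (ζ : ℂ) * xbar l + 2 * (ρ : ℂ) * ψ (ι j) + 2 * υ (ι j)) /
        ((2 * ρ + ζ + 1 : ℝ) : ℂ))
    (hΞonly : ∀ l : Fin A, (∀ j, ι j ≠ κ l) →
      xstar (κ l) = ((ζ : ℂ) * xbar l + 2 * (ρ : ℂ) * ψ (κ l) + 2 * υ (κ l)) /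
        ((2 * ρ + ζ : ℝ) : ℂ))
    (hΩonly : ∀ j : Fin α, (∀ l, κ l ≠ ι j) →
      xstar (ι j) = (ztil j - e j + 2 * (ρ : ℂ) * ψ (ι j) + 2 * υ (ι j)) /
        ((2 * ρ + 1 : ℝ) : ℂ))
    (hneither : ∀ t : Fin N, (∀ j, ι j ≠ t) → (∀ l, κ l ≠ t) →
      xstar t = ψ t + υ t / (ρ : ℂ)) :
    ∀ x : Fin N → ℂ, x ≠ xstar →
      (1 / 2) * l2sq α (fun j => ztil j - xstar (ι j) - e j) +
          (ζ / 2) * l2sq A (fun l => xstar (κ l) - xbar l) -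
          2 * rinner N υ xstar + ρ * l2sq N (fun t => xstar t - ψ t) <
      (1 / 2) * l2sq α (fun j => ztil j - x (ι j) - e j) +
          (ζ / 2) * l2sq A (fun l => x (κ l) - xbar l) -
          2 * rinner N υ x + ρ * l2sq N (fun t => x t - ψ t) := by
  intro x hx
  have hinjι := hι.injective
  have hinjκ := hκ.injective
  set c : Fin N → ℂ := indicC ι (fun j => ztil j - e j) with hc
  set d : Fin N → ℂ := indicC κ xbar with hd
  set χ : Fin N → ℝ := indicR ι with hχ
  set ξ : Fin N → ℝ := indicR κ with hξ
  -- decomposition of the objective as a sum over coordinates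
  have hdecomp : ∀ y : Fin N → ℂ,
      (1 / 2) * l2sq α (fun j => ztil j - y (ι j) - e j) +
        (ζ / 2) * l2sq A (fun l => y (κ l) - xbar l) -
        2 * rinner N υ y + ρ * l2sq N (fun t => y t - ψ t)
      = ∑ t, (χ t/2 * Complex.normSq (c t - y t) + ζ*ξ t/2 * Complex.normSq (y t - d t)
          - 2*(υ t * (starRingEnd ℂ) (y t)).re + ρ * Complex.normSq (y t - ψ t)) := by
    intro y
    have hA : (1 / 2) * l2sq α (fun j => ztil j - y (ι j) - e j)
        = ∑ t, χ t/2 * Complex.normSq (c t - y t) := by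
      have h1 : ∀ t : Fin N, χ t/2 * Complex.normSq (c t - y t)
          = (if ∃ j, ι j = t then (1/2) * Complex.normSq (c t - y t) else 0) := by
        intro t
        simp only [hχ, indicR]
        split <;> simp <;> ring
      rw [Finset.sum_congr rfl (fun t _ => h1 t),
        sum_indic ι hinjι (fun t => (1/2) * Complex.normSq (c t - y t)),
        l2sq, Finset.mul_sum]
      refine Finset.sum_congr rfl fun j _ => ?_
      rw [hc, indicC_apply ι hinjι, Complex.sq_norm]
      congr 2
      ring
    have hB : (ζ / 2) * l2sq A (fun l => y (κ l) - xbar l)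
        = ∑ t, ζ*ξ t/2 * Complex.normSq (y t - d t) := by
      have h1 : ∀ t : Fin N, ζ*ξ t/2 * Complex.normSq (y t - d t)
          = (if ∃ l, κ l = t then (ζ/2) * Complex.normSq (y t - d t) else 0) := by
        intro t
        simp only [hξ, indicR]
        split <;> simp <;> ring
      rw [Finset.sum_congr rfl (fun t _ => h1 t),
        sum_indic κ hinjκ (fun t => (ζ/2) * Complex.normSq (y t - d t)),
        l2sq, Finset.mul_sum]
      refine Finset.sum_congr rfl fun l _ => ?_
      rw [hd, indicC_apply κ hinjκ, Complex.sq_norm]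
    have hC : 2 * rinner N υ y = ∑ t, 2*(υ t * (starRingEnd ℂ) (y t)).re := by
      rw [rinner, cinner, Complex.re_sum, Finset.mul_sum]
    have hD : ρ * l2sq N (fun t => y t - ψ t)
        = ∑ t, ρ * Complex.normSq (y t - ψ t) := by
      rw [l2sq, Finset.mul_sum]
      exact Finset.sum_congr rfl fun t _ => by rw [Complex.sq_norm]
    rw [hA, hB, hC, hD, ← Finset.sum_add_distrib, ← Finset.sum_sub_distrib,
      ← Finset.sum_add_distrib]
  -- the optimality equations
  have hb : ∀ t : Fin N,
      ((χ t/2 : ℝ) : ℂ) * c t + ((ζ*ξ t/2 : ℝ) : ℂ) * d t + υ t + ((ρ:ℝ) : ℂ) * ψ t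
        = ((ρ + χ t/2 + ζ*ξ t/2 : ℝ) : ℂ) * xstar t := by
    intro t
    by_cases hΩ : ∃ j, ι j = t
    · obtain ⟨j, rfl⟩ := hΩ
      by_cases hΞ' : ∃ l, κ l = ι j
      · obtain ⟨l, hl⟩ := hΞ'
        have hxs := hboth j l hl.symm
        have hdv : d (ι j) = xbar l := by rw [← hl, hd, indicC_apply κ hinjκ]
        have hξv : ξ (ι j) = 1 := by rw [← hl, hξ, indicR_apply]
        rw [hc, indicC_apply ι hinjι, hχ, indicR_apply, hdv, hξv, hxs]
        have hden : ((2*ρ+ζ+1 : ℝ) : ℂ) ≠ 0 := by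
          exact_mod_cast ne_of_gt (by linarith : (0:ℝ) < 2*ρ+ζ+1)
        rw [← mul_div_assoc, eq_div_iff hden]
        push_cast
        ring
      · have hne : ∀ l, κ l ≠ ι j := by push_neg at hΞ'; exact hΞ'
        have hxs := hΩonly j hne
        have hξv : ξ (ι j) = 0 := by rw [hξ]; exact indicR_of_not κ _ hne
        rw [hc, indicC_apply ι hinjι, hχ, indicR_apply, hξv, hxs]
        have hden : ((2*ρ+1 : ℝ) : ℂ) ≠ 0 := by
          exact_mod_cast ne_of_gt (by linarith : (0:ℝ) < 2*ρ+1)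
        rw [← mul_div_assoc, eq_div_iff hden]
        push_cast
        ring
    · by_cases hΞ' : ∃ l, κ l = t
      · obtain ⟨l, rfl⟩ := hΞ'
        have hne : ∀ j, ι j ≠ κ l := by push_neg at hΩ; exact hΩ
        have hxs := hΞonly l hne
        have hχv : χ (κ l) = 0 := by rw [hχ]; exact indicR_of_not ι _ hne
        rw [hd, indicC_apply κ hinjκ, hξ, indicR_apply, hχv, hxs]
        have hden : ((2*ρ+ζ : ℝ) : ℂ) ≠ 0 := by
          exact_mod_cast ne_of_gt (by linarith : (0:ℝ) < 2*ρ+ζ)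
        rw [← mul_div_assoc, eq_div_iff hden]
        push_cast
        ring
      · have hneι : ∀ j, ι j ≠ t := by push_neg at hΩ; exact hΩ
        have hneκ : ∀ l, κ l ≠ t := by push_neg at hΞ'; exact hΞ'
        have hxs := hneither t hneι hneκ
        have hχv : χ t = 0 := by rw [hχ]; exact indicR_of_not ι _ hneι
        have hξv : ξ t = 0 := by rw [hξ]; exact indicR_of_not κ _ hneκ
        rw [hχv, hξv, hxs]
        have hden : ((ρ : ℝ) : ℂ) ≠ 0 := by
          exact_mod_cast ne_of_gt hρ
        field_simp
        push_cast
        ring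
  have hpos : ∀ t : Fin N, 0 < ρ + χ t/2 + ζ*ξ t/2 := by
    intro t
    have h1 : 0 ≤ χ t := indicR_nonneg ι t
    have h2 : 0 ≤ ξ t := indicR_nonneg κ t
    nlinarith [mul_nonneg hζ.le h2]
  rw [← sub_pos, hdecomp x, hdecomp xstar, ← Finset.sum_sub_distrib]
  have key : ∀ t : Fin N,
      (χ t/2 * Complex.normSq (c t - x t) + ζ*ξ t/2 * Complex.normSq (x t - d t)
        - 2*(υ t * (starRingEnd ℂ) (x t)).re + ρ * Complex.normSq (x t - ψ t))
      - (χ t/2 * Complex.normSq (c t - xstar t) + ζ*ξ t/2 * Complex.normSq (xstar t - d t)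
        - 2*(υ t * (starRingEnd ℂ) (xstar t)).re + ρ * Complex.normSq (xstar t - ψ t))
      = (ρ + χ t/2 + ζ*ξ t/2) * Complex.normSq (x t - xstar t) :=
    fun t => phi_diff (χ t) (ξ t) ρ ζ (c t) (d t) (υ t) (ψ t) (x t) (xstar t) (hb t)
  rw [Finset.sum_congr rfl (fun t _ => key t)]
  obtain ⟨t0, ht0⟩ := Function.ne_iff.mp hx
  refine Finset.sum_pos' (fun t _ => mul_nonneg (hpos t).le (Complex.normSq_nonneg _))
    ⟨t0, Finset.mem_univ _, mul_pos (hpos t0) ?_⟩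
  rw [Complex.normSq_pos]
  exact sub_ne_zero.mpr ht0
end
end
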